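/- Let g be a Lie algebra with N(g) = Ker(∇: Λ²g → g). Suppose δ and δ' are involutive Lie bialgebra structures on g that are cohomologous as 1-cocycles of g with values in N(g), i.e., there exists A ∈ N(g) with (δ' - δ)(X) = σ(X)(A) for all X ∈ g. Then the induced coboundary operators on Lie algebra homology coincide: d(δ) = d(δ'): H_*(g) → H_{*+1}(g). -/

import Mathlib

open TensorProduct

/-- The wedge product `X₁ ∧ ⋯ ∧ X_p` of a list of vectors. -/
noncomputable def wedgeList (g : Type) [AddCommGroup g] [Module ℚ g] (l : List g) :
    ExteriorAlgebra ℚ g := (l.map (ExteriorAlgebra.ι ℚ)).prod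

/-- The map `g ⊗ g → Λ* g`, `X ⊗ Y ↦ ι X * ι Y`. -/
noncomputable def toExt (g : Type) [AddCommGroup g] [Module ℚ g] :
    g ⊗[ℚ] g →ₗ[ℚ] ExteriorAlgebra ℚ g :=
  TensorProduct.lift ((LinearMap.mul ℚ (ExteriorAlgebra ℚ g)).compl₁₂
    (ExteriorAlgebra.ι ℚ) (ExteriorAlgebra.ι ℚ))

/-- The cyclic permutation `(123)` on `g ⊗ g ⊗ g`. -/
noncomputable def cycL (g : Type) [AddCommGroup g] [Module ℚ g] :
    (g ⊗[ℚ] g) ⊗[ℚ] g →ₗ[ℚ] (g ⊗[ℚ] g) ⊗[ℚ] g :=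
  (TensorProduct.comm ℚ g (g ⊗[ℚ] g)).toLinearMap ∘ₗ (TensorProduct.assoc ℚ g g g).toLinearMap

/-- The diagonal adjoint action `σ(Y)` on `g ⊗ g` (hence on `Λ²g ⊂ g ⊗ g`). -/
noncomputable def sig2 (g : Type) [LieRing g] [LieAlgebra ℚ g] (Y : g) :
    g ⊗[ℚ] g →ₗ[ℚ] g ⊗[ℚ] g :=
  TensorProduct.map (LieAlgebra.ad ℚ g Y) LinearMap.id +
    TensorProduct.map LinearMap.id (LieAlgebra.ad ℚ g Y)

attribute [local instance 100] LieRing.ofAssociativeRing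

/-- The bracket map `∇ : g ⊗ g → g`. -/
noncomputable def brm (g : Type) [LieRing g] [LieAlgebra ℚ g] :
    g ⊗[ℚ] g →ₗ[ℚ] g :=
  TensorProduct.lift (LieAlgebra.ad ℚ g).toLinearMap

/-- `IsInvBialgStruct g δ` : `δ` is an involutive Lie bialgebra structure on the Lie
algebra `g` (coskew, coJacobi, compatible with the bracket, and `∇δ = 0`, i.e. `δ` is a
`1`-cocycle of `g` with values in `N(g) = Ker(∇: Λ²g → g)`). -/
def IsInvBialgStruct (g : Type) [LieRing g] [LieAlgebra ℚ g]
    (δ : g →ₗ[ℚ] g ⊗[ℚ] g) : Prop :=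
  (∀ X : g, TensorProduct.comm ℚ g g (δ X) = - δ X) ∧
  ((LinearMap.id + cycL g + cycL g ∘ₗ cycL g) ∘ₗ
    TensorProduct.map δ LinearMap.id ∘ₗ δ = 0) ∧
  (∀ X Y : g, δ ⁅X, Y⁆ = sig2 g X (δ Y) - sig2 g Y (δ X)) ∧
  brm g ∘ₗ δ = 0


/-! ### Auxiliary lemmas -/

lemma wedge_cons (g : Type) [AddCommGroup g] [Module ℚ g] (x : g) (l : List g) :
    wedgeList g (x :: l) = ExteriorAlgebra.ι ℚ x * wedgeList g l := by
  simp [wedgeList]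

lemma ofFn_cons' {g : Type} {p : ℕ} (x : g) (X : Fin p → g) :
    List.ofFn (Fin.cons x X : Fin (p+1) → g) = x :: List.ofFn X := by
  simp [List.ofFn_succ]

lemma wedge_ofFn (g : Type) [AddCommGroup g] [Module ℚ g] {p : ℕ} (X : Fin p → g) :
    wedgeList g (List.ofFn X) = ExteriorAlgebra.ιMulti ℚ p X := by
  simp only [wedgeList, ExteriorAlgebra.ιMulti_apply, List.map_ofFn]
  rfl

lemma ι_swap (g : Type) [AddCommGroup g] [Module ℚ g] (x y : g) :
    ExteriorAlgebra.ι ℚ x * ExteriorAlgebra.ι ℚ y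
      = -(ExteriorAlgebra.ι ℚ y * ExteriorAlgebra.ι ℚ x) :=
  eq_neg_of_add_eq_zero_left (ExteriorAlgebra.ι_add_mul_swap x y)

lemma ι_comm3 (g : Type) [AddCommGroup g] [Module ℚ g] (a b c : g)
    (w : ExteriorAlgebra ℚ g) :
    ExteriorAlgebra.ι ℚ c * (ExteriorAlgebra.ι ℚ a * (ExteriorAlgebra.ι ℚ b * w)) =
    ExteriorAlgebra.ι ℚ a * (ExteriorAlgebra.ι ℚ b * (ExteriorAlgebra.ι ℚ c * w)) := by
  rw [← mul_assoc, ι_swap g c a, neg_mul, mul_assoc, ← mul_assoc (ExteriorAlgebra.ι ℚ c),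
    ι_swap g c b, neg_mul, mul_assoc, mul_neg, neg_neg, ← mul_assoc, ← mul_assoc, mul_assoc]

lemma toExt_tmul (g : Type) [AddCommGroup g] [Module ℚ g] (u v : g) :
    toExt g (u ⊗ₜ[ℚ] v) = ExteriorAlgebra.ι ℚ u * ExteriorAlgebra.ι ℚ v := by
  simp [toExt]

lemma brm_tmul (g : Type) [LieRing g] [LieAlgebra ℚ g] (u v : g) :
    brm g (u ⊗ₜ[ℚ] v) = ⁅u, v⁆ := by
  simp [brm]

lemma sig2_tmul (g : Type) [LieRing g] [LieAlgebra ℚ g] (Y u v : g) :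
    sig2 g Y (u ⊗ₜ[ℚ] v) = ⁅Y, u⁆ ⊗ₜ[ℚ] v + u ⊗ₜ[ℚ] ⁅Y, v⁆ := by
  simp [sig2]

section KeyLemmas

variable (gL : Type) [LieRing gL] [LieAlgebra ℚ gL]
variable (pa : ExteriorAlgebra ℚ gL →ₗ[ℚ] ExteriorAlgebra ℚ gL)
variable (hpa : ∀ (p : ℕ) (X : Fin p → gL),
      pa (wedgeList gL (List.ofFn X)) =
        ∑ i : Fin p, ∑ j : Fin p, if (i : ℕ) < (j : ℕ) then
          ((-1 : ℚ) ^ ((i : ℕ) + (j : ℕ))) •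
            (ExteriorAlgebra.ι ℚ ⁅X i, X j⁆ *
              wedgeList gL (((List.ofFn X).eraseIdx (j : ℕ)).eraseIdx (i : ℕ)))
        else 0)

include hpa in
lemma key (x y : gL) (p : ℕ) (X : Fin p → gL) :
    pa (ExteriorAlgebra.ι ℚ x * (ExteriorAlgebra.ι ℚ y * wedgeList gL (List.ofFn X))) =
      -(ExteriorAlgebra.ι ℚ ⁅x, y⁆ * wedgeList gL (List.ofFn X))
      + ExteriorAlgebra.ι ℚ x * (ExteriorAlgebra.ι ℚ y * pa (wedgeList gL (List.ofFn X)))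
      + ∑ l : Fin p, ((-1 : ℚ) ^ ((l : ℕ) + 1)) •
          ((ExteriorAlgebra.ι ℚ ⁅X l, x⁆ * ExteriorAlgebra.ι ℚ y
            + ExteriorAlgebra.ι ℚ x * ExteriorAlgebra.ι ℚ ⁅X l, y⁆) *
            wedgeList gL ((List.ofFn X).eraseIdx (l : ℕ))) := by
  have hY : ExteriorAlgebra.ι ℚ x * (ExteriorAlgebra.ι ℚ y * wedgeList gL (List.ofFn X))
      = wedgeList gL (List.ofFn (Fin.cons x (Fin.cons y X) : Fin (p+2) → gL)) := by
    rw [ofFn_cons', ofFn_cons', wedge_cons, wedge_cons]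
  rw [hY, hpa (p+2), hpa p, ofFn_cons', ofFn_cons']
  simp only [Fin.sum_univ_succ, Fin.cons_zero, Fin.cons_succ, Fin.val_zero, Fin.val_succ,
    List.eraseIdx_cons_succ, List.eraseIdx_cons_zero, zero_add, wedge_cons,
    lt_self_iff_false, if_false, Nat.zero_lt_succ, if_true, Nat.succ_lt_succ_iff,
    Nat.not_lt_zero, Nat.add_lt_add_iff_right]
  rw [pow_one, neg_one_smul]
  have hint : (∑ i : Fin p, ∑ j : Fin p,
      if (i:ℕ) < (j:ℕ) then
        (-1:ℚ) ^ ((i:ℕ) + 1 + 1 + ((j:ℕ) + 1 + 1)) •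
          (ExteriorAlgebra.ι ℚ ⁅X i, X j⁆ *
            (ExteriorAlgebra.ι ℚ x *
              (ExteriorAlgebra.ι ℚ y *
                wedgeList gL (((List.ofFn X).eraseIdx (j:ℕ)).eraseIdx (i:ℕ)))))
      else 0) =
      ExteriorAlgebra.ι ℚ x * (ExteriorAlgebra.ι ℚ y *
        ∑ i : Fin p, ∑ j : Fin p,
          if (i:ℕ) < (j:ℕ) then
            (-1:ℚ) ^ ((i:ℕ) + (j:ℕ)) •
              (ExteriorAlgebra.ι ℚ ⁅X i, X j⁆ *
                wedgeList gL (((List.ofFn X).eraseIdx (j:ℕ)).eraseIdx (i:ℕ)))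
          else 0) := by
    simp only [Finset.mul_sum]
    refine Finset.sum_congr rfl fun i _ => ?_
    refine Finset.sum_congr rfl fun j _ => ?_
    by_cases h : (i:ℕ) < (j:ℕ)
    · simp only [h, if_true, mul_smul_comm]
      rw [ι_comm3,
        show ((-1:ℚ))^((i:ℕ)+1+1+((j:ℕ)+1+1)) = (-1)^((i:ℕ)+(j:ℕ)) by ring]
    · simp [h]
  have hcross : (∑ l : Fin p,
      (-1:ℚ) ^ ((l:ℕ) + 1 + 1) •
        (ExteriorAlgebra.ι ℚ ⁅x, X l⁆ *
          (ExteriorAlgebra.ι ℚ y * wedgeList gL ((List.ofFn X).eraseIdx (l:ℕ))))) +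
      (∑ l : Fin p,
      (-1:ℚ) ^ (1 + ((l:ℕ) + 1 + 1)) •
        (ExteriorAlgebra.ι ℚ ⁅y, X l⁆ *
          (ExteriorAlgebra.ι ℚ x * wedgeList gL ((List.ofFn X).eraseIdx (l:ℕ))))) =
      ∑ l : Fin p, (-1:ℚ) ^ ((l:ℕ) + 1) •
        ((ExteriorAlgebra.ι ℚ ⁅X l, x⁆ * ExteriorAlgebra.ι ℚ y +
          ExteriorAlgebra.ι ℚ x * ExteriorAlgebra.ι ℚ ⁅X l, y⁆) *
          wedgeList gL ((List.ofFn X).eraseIdx (l:ℕ))) := by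
    rw [← Finset.sum_add_distrib]
    refine Finset.sum_congr rfl fun l _ => ?_
    rw [← lie_skew x (X l), ← lie_skew y (X l), map_neg, map_neg, neg_mul,
      neg_mul, ι_swap gL x ⁅X l, y⁆, add_mul, neg_mul, mul_assoc, mul_assoc]
    module
  rw [hint, ← hcross]
  abel

include hpa in
lemma key2 (q : ℕ) (X : Fin q → gL) (A : gL ⊗[ℚ] gL) :
    pa (toExt gL A * wedgeList gL (List.ofFn X)) =
      -(ExteriorAlgebra.ι ℚ (brm gL A) * wedgeList gL (List.ofFn X))
      + toExt gL A * pa (wedgeList gL (List.ofFn X))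
      + ∑ l : Fin q, ((-1 : ℚ) ^ ((l : ℕ) + 1)) •
          (toExt gL (sig2 gL (X l) A) * wedgeList gL ((List.ofFn X).eraseIdx (l : ℕ))) := by
  induction A using TensorProduct.induction_on with
  | zero => simp
  | tmul u v =>
    rw [toExt_tmul, brm_tmul, mul_assoc, key gL pa hpa u v q X]
    simp only [sig2_tmul, map_add, toExt_tmul, mul_assoc]
  | add B C hB hC =>
    simp only [map_add, add_mul, hB, hC, smul_add, Finset.sum_add_distrib, neg_add]
    abel

end KeyLemmas

/-- if two involutive Lie bialgebra structures `δ, δ'` on `g` are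
cohomologous as 1-cocycles with values in `N(g) = Ker ∇` (i.e. `δ' - δ` is the coboundary
of some `A ∈ N(g)`), then the induced coboundary operators on Lie algebra homology
coincide: `d(δ) = d(δ')` on `H_*(g)`, i.e. on every cycle `d'ξ - dξ` is a boundary. -/
theorem stmt12 (g : Type) [LieRing g] [LieAlgebra ℚ g]
    (δ δ' : g →ₗ[ℚ] g ⊗[ℚ] g)
    (hδ : IsInvBialgStruct g δ) (hδ' : IsInvBialgStruct g δ')
    (A : g ⊗[ℚ] g)
    (hAalt : TensorProduct.comm ℚ g g A = - A)
    (hAN : brm g A = 0)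
    (hcob : ∀ X : g, δ' X - δ X = sig2 g X A)
    (pa d d' : ExteriorAlgebra ℚ g →ₗ[ℚ] ExteriorAlgebra ℚ g)
    (hpa : ∀ (p : ℕ) (X : Fin p → g),
      pa (wedgeList g (List.ofFn X)) =
        ∑ i : Fin p, ∑ j : Fin p, if (i : ℕ) < (j : ℕ) then
          ((-1 : ℚ) ^ ((i : ℕ) + (j : ℕ))) •
            (ExteriorAlgebra.ι ℚ ⁅X i, X j⁆ *
              wedgeList g (((List.ofFn X).eraseIdx (j : ℕ)).eraseIdx (i : ℕ)))
        else 0)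
    (hd : ∀ (p : ℕ) (X : Fin p → g),
      d (wedgeList g (List.ofFn X)) =
        ∑ i : Fin p, ((-1 : ℚ) ^ ((i : ℕ) + 1)) •
          (toExt g (δ (X i)) * wedgeList g ((List.ofFn X).eraseIdx (i : ℕ))))
    (hd' : ∀ (p : ℕ) (X : Fin p → g),
      d' (wedgeList g (List.ofFn X)) =
        ∑ i : Fin p, ((-1 : ℚ) ^ ((i : ℕ) + 1)) •
          (toExt g (δ' (X i)) * wedgeList g ((List.ofFn X).eraseIdx (i : ℕ)))) :
    ∀ ξ : ExteriorAlgebra ℚ g, pa ξ = 0 → ∃ η, d' ξ - d ξ = pa η := by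
  classical
  have hT : ∀ ξ : ExteriorAlgebra ℚ g,
      d' ξ - d ξ = pa (toExt g A * ξ) - toExt g A * pa ξ := by
    intro ξ
    have hmem : ξ ∈ Submodule.span ℚ (Set.range fun x : Σ n, (Fin n → g) =>
        ExteriorAlgebra.ιMulti ℚ x.1 x.2) := by
      rw [ExteriorAlgebra.ιMulti_span]; exact Submodule.mem_top
    refine Submodule.span_induction (fun w hw => ?_) ?_ ?_ ?_ hmem
    · obtain ⟨⟨q, X⟩, rfl⟩ := hw
      beta_reduce
      rw [← wedge_ofFn, key2 g pa hpa q X A, hAN, map_zero, zero_mul, neg_zero, zero_add,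
        hd q X, hd' q X]
      simp only [← hcob, map_sub, sub_mul, smul_sub, Finset.sum_sub_distrib]
      abel
    · simp
    · intro u v _ _ h1 h2
      simp only [map_add, mul_add]
      rw [add_sub_add_comm, h1, h2, add_sub_add_comm]
    · intro r w _ h1
      simp only [map_smul, mul_smul_comm]
      rw [← smul_sub, ← smul_sub, h1]
  intro ξ hξ
  exact ⟨toExt g A * ξ, by rw [hT ξ, hξ, mul_zero, sub_zero]⟩
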